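/- There do not exist coprime squarefree natural numbers a, a' with a > 1 and a' > 1 such that σ(a)/a = σ(a')/a' (equivalently, such that σ(a)·a' = σ(a')·a). -/
import Mathlib


open scoped BigOperators

/-- The sum-of-divisors function `σ(n) = ∑_{d ∣ n} d`. -/
def sigma1 (n : ℕ) : ℕ := ∑ d ∈ n.divisors, d

lemma sigma1_squarefree {n : ℕ} (hn : n ≠ 0) (hsf : Squarefree n) :
    sigma1 n = ∏ p ∈ n.primeFactors, (p + 1) := by
  rw [sigma1, Nat.sum_divisors hn]
  refine Finset.prod_congr rfl fun p hp => ?_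
  obtain ⟨hpp, hpd, -⟩ := Nat.mem_primeFactors.mp hp
  rw [Nat.factorization_eq_one_of_squarefree hsf hpp hpd]
  simp [Finset.sum_range_succ, Nat.add_comm]

lemma eq_six {n : ℕ} (h1 : 1 < n) (hsf : Squarefree n) (hd : n ∣ sigma1 n) : n = 6 := by
  have hn0 : n ≠ 0 := by omega
  have hne : n.primeFactors.Nonempty := by
    rw [Nat.nonempty_primeFactors]; exact h1
  set p := n.primeFactors.max' hne with hp
  have hpmem : p ∈ n.primeFactors := n.primeFactors.max'_mem hne
  obtain ⟨hpp, hpd, -⟩ := Nat.mem_primeFactors.mp hpmem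
  have hps : p ∣ sigma1 n := hpd.trans hd
  rw [sigma1_squarefree hn0 hsf] at hps
  obtain ⟨q, hqmem, hpq⟩ := (Prime.dvd_finset_prod_iff hpp.prime _).mp hps
  obtain ⟨hqp, hqd, -⟩ := Nat.mem_primeFactors.mp hqmem
  have hqle : q ≤ p := Finset.le_max' _ _ hqmem
  -- p ∣ q+1, with p ≤ q+1 ≤ p+1
  have hple : p ≤ q + 1 := Nat.le_of_dvd (by omega) hpq
  have hq1 : q + 1 = p := by
    rcases Nat.lt_or_ge (q+1) (p+1) with h | h
    · omega
    · -- q = p, so p ∣ p + 1, impossible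
      exfalso
      have hqe : q = p := by omega
      rw [hqe] at hpq
      have h1 : p ∣ 1 := (Nat.dvd_add_right (dvd_refl p)).mp hpq
      have := Nat.le_of_dvd one_pos h1
      have := hpp.two_le
      omega
  have hq2 : q = 2 := by
    by_contra h
    obtain ⟨k, hk⟩ := hqp.odd_of_ne_two h
    have hq3 : 3 ≤ q := by
      have := hqp.two_le; omega
    have hpe : Even p := ⟨k + 1, by omega⟩
    have := (Nat.Prime.even_iff hpp).mp hpe
    omega
  have hp3 : p = 3 := by omega
  have hsub : n.primeFactors ⊆ ({2, 3} : Finset ℕ) := by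
    intro r hr
    obtain ⟨hrp, -, -⟩ := Nat.mem_primeFactors.mp hr
    have := Finset.le_max' _ _ hr
    have h2 := hrp.two_le
    simp only [Finset.mem_insert, Finset.mem_singleton]
    omega
  have h2mem : 2 ∈ n.primeFactors := hq2 ▸ hqmem
  have h3mem : 3 ∈ n.primeFactors := hp3 ▸ hpmem
  have heq : n.primeFactors = ({2, 3} : Finset ℕ) := by
    apply Finset.Subset.antisymm hsub
    intro r hr
    simp only [Finset.mem_insert, Finset.mem_singleton] at hr
    rcases hr with rfl | rfl <;> assumption
  have := Nat.prod_primeFactors_of_squarefree hsf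
  rw [heq] at this
  simpa using this.symm

theorem stmt15 : ¬∃ a a' : ℕ, 1 < a ∧ 1 < a' ∧ Nat.Coprime a a' ∧
    Squarefree a ∧ Squarefree a' ∧ (sigma1 a : ℚ) / a = (sigma1 a' : ℚ) / a' := by
  rintro ⟨a, a', ha, ha', hcop, hsa, hsa', heq⟩
  have ha0 : (a : ℚ) ≠ 0 := by positivity
  have ha'0 : (a' : ℚ) ≠ 0 := by positivity
  rw [div_eq_div_iff ha0 ha'0] at heq
  have heqn : sigma1 a * a' = sigma1 a' * a := by exact_mod_cast heq
  have hda : a ∣ sigma1 a := by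
    refine (Nat.Coprime.dvd_of_dvd_mul_right hcop ?_)
    rw [heqn]; exact dvd_mul_left a (sigma1 a')
  have hda' : a' ∣ sigma1 a' := by
    refine (Nat.Coprime.dvd_of_dvd_mul_right hcop.symm ?_)
    rw [← heqn]; exact dvd_mul_left a' (sigma1 a)
  have h6 : a = 6 := eq_six ha hsa hda
  have h6' : a' = 6 := eq_six ha' hsa' hda'
  rw [h6, h6'] at hcop
  exact absurd hcop (by decide)
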